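/- Let M be an Orlicz function and let p ≥ 1 be a real number. If sup{ M(u·v) / (u^p · M(v)) : u, v ∈ (0,1] } = ∞, then there exists a sequence z : ℕ → ℝ, not identically zero, such that (i) for every real c the family (n ↦ M(c·z(n))) is summable, and (ii) limsup_{t→0⁺} ( ∑_{n∈ℕ} M(t·z(n)) ) /ت^p = ∞, i.e. the quotient (∑_{n} M(t·z(n)))/t^p is unbounded as t → 0⁺. -/

import Mathlib

open Set

lemma orlicz_nonneg (M : ℝ → ℝ) (hzero : M 0 = 0)
    (hpos : ∀ t : ℝ, t ≠ 0 → 0 < M t) : ∀ t, 0 ≤ M t := by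
  intro t
  rcases eq_or_ne t 0 with h | h
  · simp [h, hzero]
  · exact (hpos t h).le

lemma orlicz_scale (M : ℝ → ℝ) (hconv : ConvexOn ℝ Set.univ M) (hzero : M 0 = 0) :
    ∀ u v : ℝ, 0 ≤ u → u ≤ 1 → M (u * v) ≤ u * M v := by
  intro u v hu hu1
  have h := hconv.2 (mem_univ v) (mem_univ (0:ℝ)) hu (by linarith : (0:ℝ) ≤ 1 - u) (by ring)
  simpa [hzero, smul_eq_mul] using h

lemma orlicz_mono (M : ℝ → ℝ) (hconv : ConvexOn ℝ Set.univ M) (hzero : M 0 = 0)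
    (hpos : ∀ t : ℝ, t ≠ 0 → 0 < M t) :
    ∀ a b : ℝ, 0 ≤ a → a ≤ b → M a ≤ M b := by
  intro a b ha hab
  rcases eq_or_lt_of_le (ha.trans hab) with hb | hb
  · have : a = 0 := le_antisymm (hab.trans hb.symm.le) ha
    simp [this, ← hb]
  · have h1 : M ((a/b) * b) ≤ (a/b) * M b :=
      orlicz_scale M hconv hzero _ _ (div_nonneg ha hb.le) (div_le_one_of_le₀ hab hb.le)
    rw [div_mul_cancel₀ _ hb.ne'] at h1
    exact h1.trans (mul_le_of_le_one_left (orlicz_nonneg M hzero hpos b) (div_le_one_of_le₀ hab hb.le))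

lemma orlicz_quot_le (M : ℝ → ℝ) (p : ℝ) (hconv : ConvexOn ℝ Set.univ M) (hzero : M 0 = 0)
    (hpos : ∀ t : ℝ, t ≠ 0 → 0 < M t)
    {u v : ℝ} (hu : 0 < u) (hu1 : u ≤ 1) (hv : 0 < v) :
    M (u * v) / (u ^ p * M v) ≤ u ^ (1 - p) := by
  have hup : (0:ℝ) < u ^ p := Real.rpow_pos_of_pos hu p
  have hMv : 0 < M v := hpos v hv.ne'
  rw [div_le_iff₀ (by positivity)]
  have : u ^ (1-p) * (u ^ p * M v) = u * M v := by
    rw [← mul_assoc, ← Real.rpow_add hu]; norm_num [Real.rpow_one, mul_comm]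
  rw [this]
  exact orlicz_scale M hconv hzero u v hu.le hu1

lemma orlicz_claimA (M : ℝ → ℝ) (p : ℝ) (hp : 1 ≤ p)
    (hconv : ConvexOn ℝ Set.univ M) (hzero : M 0 = 0)
    (hpos : ∀ t : ℝ, t ≠ 0 → 0 < M t)
    (hsup : ¬ BddAbove {r : ℝ | ∃ u ∈ Set.Ioc (0:ℝ) 1, ∃ v ∈ Set.Ioc (0:ℝ) 1,
        r = M (u * v) / (u ^ p * M v)}) :
    ∀ δ : ℝ, 0 < δ → δ ≤ 1 → ∀ R : ℝ, ∃ u v : ℝ,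
      0 < u ∧ u ≤ 1 ∧ 0 < v ∧ v ≤ δ ∧ R < M (u * v) / (u ^ p * M v) := by
  intro δ hδ hδ1 R
  by_contra hcon
  push_neg at hcon
  have hMδ : 0 < M δ := hpos δ hδ.ne'
  have hR0 : 0 ≤ R := by
    have h := hcon δ δ hδ hδ1 hδ le_rfl
    have h0 : 0 ≤ M (δ * δ) / (δ ^ p * M δ) :=
      div_nonneg (orlicz_nonneg M hzero hpos _)
        (mul_nonneg (Real.rpow_pos_of_pos hδ p).le hMδ.le)
    linarith
  apply hsup
  refine ⟨R / δ ^ p + δ ^ (1 - p), fun r hr => ?_⟩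
  obtain ⟨u, ⟨hu0, hu1⟩, v, ⟨hv0, hv1⟩, rfl⟩ := hr
  have hδp : (0:ℝ) < δ ^ p := Real.rpow_pos_of_pos hδ p
  have hδ1p : (0:ℝ) ≤ δ ^ (1 - p) := (Real.rpow_pos_of_pos hδ _).le
  have hRq : (0:ℝ) ≤ R / δ ^ p := by positivity
  have hMv : 0 < M v := hpos v hv0.ne'
  have hup : (0:ℝ) < u ^ p := Real.rpow_pos_of_pos hu0 p
  rcases le_or_gt v δ with hcase | hcase
  · -- v ≤ δ : quotient ≤ R ≤ R/δ^p
    have h1 : M (u * v) / (u ^ p * M v) ≤ R := hcon u v hu0 hu1 hv0 hcase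
    have h2 : R ≤ R / δ ^ p := by
      rw [le_div_iff₀ hδp]
      exact mul_le_of_le_one_right hR0 (Real.rpow_le_one hδ.le hδ1 (by linarith))
    linarith
  · rcases le_or_gt (u * v) δ with hcase2 | hcase2
    · -- u*v ≤ δ < v
      set u' := u * v / δ with hu'def
      have hu'0 : 0 < u' := by positivity
      have hu'1 : u' ≤ 1 := div_le_one_of_le₀ hcase2 hδ.le
      have h1 : M (u' * δ) / (u' ^ p * M δ) ≤ R := hcon u' δ hu'0 hu'1 hδ le_rfl
      have hu'p : (0:ℝ) < u' ^ p := Real.rpow_pos_of_pos hu'0 p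
      have h2 : M (u * v) ≤ R * (u' ^ p * M δ) := by
        have he : u' * δ = u * v := div_mul_cancel₀ _ hδ.ne'
        rw [← he]
        exact (div_le_iff₀ (by positivity)).mp h1
      have hu'p_eq : u' ^ p = u ^ p * v ^ p / δ ^ p := by
        rw [hu'def, Real.div_rpow (by positivity) hδ.le, Real.mul_rpow hu0.le hv0.le]
      have hvp1 : v ^ p ≤ 1 := Real.rpow_le_one hv0.le hv1 (by linarith)
      have hvp0 : (0:ℝ) ≤ v ^ p := (Real.rpow_pos_of_pos hv0 p).le
      have hMδv : M δ ≤ M v := orlicz_mono M hconv hzero hpos δ v hδ.le hcase.le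
      have key : M (u * v) ≤ R / δ ^ p * (u ^ p * M v) := by
        have step1 : R * (u' ^ p * M δ) = R / δ ^ p * (u ^ p * (v ^ p * M δ)) := by
          rw [hu'p_eq]; ring
        have step2 : v ^ p * M δ ≤ M v := by
          calc v ^ p * M δ ≤ 1 * M v := mul_le_mul hvp1 hMδv hMδ.le zero_le_one
            _ = M v := one_mul _
        calc M (u * v) ≤ R * (u' ^ p * M δ) := h2
          _ = R / δ ^ p * (u ^ p * (v ^ p * M δ)) := step1
          _ ≤ R / δ ^ p * (u ^ p * M v) := by
              apply mul_le_mul_of_nonneg_left _ hRq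
              exact mul_le_mul_of_nonneg_left step2 hup.le
      have : M (u * v) / (u ^ p * M v) ≤ R / δ ^ p :=
        (div_le_iff₀ (by positivity)).mpr key
      linarith
    · -- δ < u * v, so δ < u, quotient ≤ u^(1-p) ≤ δ^(1-p)
      have hδu : δ < u := lt_of_lt_of_le hcase2 (by nlinarith)
      have h1 : M (u * v) / (u ^ p * M v) ≤ u ^ (1 - p) :=
        orlicz_quot_le M p hconv hzero hpos hu0 hu1 hv0
      have h2 : u ^ (1 - p) ≤ δ ^ (1 - p) :=
        Real.rpow_le_rpow_of_nonpos hδ hδu.le (by linarith)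
      linarith

lemma orlicz_claimB (M : ℝ → ℝ) (p : ℝ) (hp1 : 1 < p)
    (hconv : ConvexOn ℝ Set.univ M) (hzero : M 0 = 0)
    (hpos : ∀ t : ℝ, t ≠ 0 → 0 < M t)
    (hsup : ¬ BddAbove {r : ℝ | ∃ u ∈ Set.Ioc (0:ℝ) 1, ∃ v ∈ Set.Ioc (0:ℝ) 1,
        r = M (u * v) / (u ^ p * M v)}) :
    ∀ k : ℕ, ∃ (u v : ℝ) (N : ℕ),
      0 < u ∧ u ≤ 1 ∧ 0 < v ∧ v ≤ 1 ∧ u ^ (p-1) < (1/2:ℝ)^k ∧ 1 ≤ N ∧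
      (N:ℝ) * M (((k:ℝ)+1) * v) ≤ (1/2:ℝ)^k ∧
      (2:ℝ)^k * u ^ p ≤ (N:ℝ) * M (u * v) := by
  have hp : 1 ≤ p := hp1.le
  intro k
  obtain ⟨m, hm_def, hm0, hm1⟩ : ∃ m : ℝ, m = (k:ℝ) + 1 ∧ 0 < m ∧ 1 ≤ m :=
    ⟨(k:ℝ) + 1, rfl, by positivity, by simp⟩
  obtain ⟨P, hP_def, hP0, hP1, hPinv⟩ :
      ∃ P : ℝ, P = (2:ℝ)^k ∧ 0 < P ∧ 1 ≤ P ∧ (1/2:ℝ)^k = P⁻¹ :=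
    ⟨(2:ℝ)^k, rfl, by positivity, one_le_pow₀ (by norm_num),
      by rw [div_pow, one_pow, one_div]⟩
  rw [← hm_def, ← hP_def, hPinv]
  have hPi : (0:ℝ) < P⁻¹ := by positivity
  have hPP : P * P⁻¹ = 1 := mul_inv_cancel₀ hP0.ne'
  have hM1 : 0 < M 1 := hpos 1 one_ne_zero
  obtain ⟨δ, hδ0, hδm, hδ2⟩ :
      ∃ δ : ℝ, 0 < δ ∧ δ ≤ 1/m ∧ δ ≤ P⁻¹ / (2 * m * (M 1 + 1)) :=
    ⟨min (1/m) (P⁻¹ / (2 * m * (M 1 + 1))), lt_min (by positivity) (by positivity),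
      min_le_left _ _, min_le_right _ _⟩
  have hδA0 : 0 < m * δ := by positivity
  have hδA1 : m * δ ≤ 1 := by
    calc m * δ ≤ m * (1/m) := mul_le_mul_of_nonneg_left hδm hm0.le
      _ = 1 := by field_simp
  have hmp0 : (0:ℝ) < m ^ p := Real.rpow_pos_of_pos hm0 p
  obtain ⟨R, hR_def⟩ : ∃ R : ℝ, R = m ^ p * (8 * P^2) := ⟨_, rfl⟩
  have hP2 : (1:ℝ) ≤ P^2 := one_le_pow₀ hP1
  have hR0 : 0 < R := by rw [hR_def]; positivity
  obtain ⟨u', w, hu'0, hu'1, hw0, hwδ, hQ⟩ :=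
    orlicz_claimA M p hp hconv hzero hpos hsup (m * δ) hδA0 hδA1 R
  have hMw : 0 < M w := hpos w hw0.ne'
  have hu'p : (0:ℝ) < u' ^ p := Real.rpow_pos_of_pos hu'0 p
  have hR_lt : R < u' ^ (1 - p) :=
    lt_of_lt_of_le hQ (orlicz_quot_le M p hconv hzero hpos hu'0 hu'1 hw0)
  have hu'pm : u' ^ (p - 1) < 1 / R := by
    have h1 : u' ^ (p - 1) = (u' ^ (1 - p))⁻¹ := by
      rw [show p - 1 = -(1 - p) by ring, Real.rpow_neg hu'0.le]
    rw [h1, one_div]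
    exact inv_strictAnti₀ hR0 hR_lt
  have hmpR : m ^ (p - 1) ≤ R := by
    have h1 : m ^ (p - 1) ≤ m ^ p := Real.rpow_le_rpow_of_exponent_le hm1 (by linarith)
    have h2 : m ^ p ≤ R := by
      rw [hR_def]
      exact le_mul_of_one_le_right hmp0.le (by linarith)
    linarith
  have hu'm : u' < 1 / m := by
    by_contra hcc
    push_neg at hcc
    have h1 : (1/m) ^ (p-1) ≤ u' ^ (p-1) := Real.rpow_le_rpow (by positivity) hcc (by linarith)
    have h2 : (1/m) ^ (p-1) = (m ^ (p-1))⁻¹ := by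
      rw [one_div, Real.inv_rpow hm0.le]
    have h3 : (1:ℝ) / R ≤ (m ^ (p-1))⁻¹ := by
      rw [one_div]
      exact inv_anti₀ (Real.rpow_pos_of_pos hm0 _) hmpR
    rw [h2] at h1
    linarith
  refine ⟨m * u', w / m, ?_⟩
  have hu0 : 0 < m * u' := by positivity
  have hu1 : m * u' ≤ 1 := by
    calc m * u' ≤ m * (1/m) := mul_le_mul_of_nonneg_left hu'm.le hm0.le
      _ = 1 := by field_simp
  have hv0 : 0 < w / m := by positivity
  have hvδ : w / m ≤ δ := by
    rw [div_le_iff₀ hm0]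
    calc w ≤ m * δ := hwδ
      _ = δ * m := by ring
  have hv1 : w / m ≤ 1 := by
    have h1m : 1/m ≤ 1 := by rw [div_le_one hm0]; exact hm1
    linarith
  have hmv : m * (w / m) = w := by field_simp
  have huv : (m * u') * (w / m) = u' * w := by field_simp
  have hup_eq : (m * u') ^ p = m ^ p * u' ^ p := Real.mul_rpow hm0.le hu'0.le
  have hup1_eq : (m * u') ^ (p-1) = m ^ (p-1) * u' ^ (p-1) := Real.mul_rpow hm0.le hu'0.le
  have hmp1_0 : (0:ℝ) < m ^ (p-1) := Real.rpow_pos_of_pos hm0 _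
  have hupow : (m * u') ^ (p-1) < P⁻¹ := by
    rw [hup1_eq]
    have h2 : m ^ (p-1) * u' ^ (p-1) < m ^ (p-1) * (1/R) :=
      (mul_lt_mul_iff_right₀ hmp1_0).mpr hu'pm
    have h3 : m ^ (p-1) * (1/R) ≤ P⁻¹ := by
      rw [mul_one_div, div_le_iff₀ hR0, hR_def]
      have hmm : m ^ (p-1) ≤ m ^ p := Real.rpow_le_rpow_of_exponent_le hm1 (by linarith)
      have he : P⁻¹ * (m ^ p * (8 * P^2)) = m ^ p * (8*P) * (P * P⁻¹) := by ring
      rw [he, hPP, mul_one]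
      calc m ^ (p-1) ≤ m ^ p := hmm
        _ ≤ m ^ p * (8*P) := le_mul_of_one_le_right hmp0.le (by linarith)
    linarith
  have hMuv : 0 < M (u' * w) := hpos _ (by positivity)
  have hkey : 8 * P^2 * ((m * u') ^ p * M w) < M (u' * w) := by
    have h1 : R * (u' ^ p * M w) < M (u' * w) :=
      (lt_div_iff₀ (by positivity)).mp hQ
    calc 8 * P^2 * ((m * u') ^ p * M w) = R * (u' ^ p * M w) := by
          rw [hup_eq, hR_def]; ring
      _ < M (u' * w) := h1
  have hw1 : w ≤ P⁻¹ / (2 * (M 1 + 1)) := by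
    have h1 : m * δ ≤ m * (P⁻¹ / (2 * m * (M 1 + 1))) :=
      mul_le_mul_of_nonneg_left hδ2 hm0.le
    have h2 : m * (P⁻¹ / (2 * m * (M 1 + 1))) = P⁻¹ / (2 * (M 1 + 1)) := by
      field_simp
    linarith
  have hwle1 : w ≤ 1 := by
    have hPi1 : P⁻¹ ≤ 1 := by rw [inv_le_one_iff₀]; right; exact hP1
    have h2 : P⁻¹ / (2 * (M 1 + 1)) ≤ 1 := by
      rw [div_le_one (by positivity)]
      linarith
    linarith
  have hMwle : M w ≤ P⁻¹ / 2 := by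
    have h1 : M (w * 1) ≤ w * M 1 := orlicz_scale M hconv hzero w 1 hw0.le hwle1
    rw [mul_one] at h1
    have h2 : w * M 1 ≤ (P⁻¹ / (2 * (M 1 + 1))) * M 1 :=
      mul_le_mul_of_nonneg_right hw1 hM1.le
    have h3 : (P⁻¹ / (2 * (M 1 + 1))) * M 1 ≤ P⁻¹ / 2 := by
      have hM11 : M 1 + 1 ≠ 0 := by positivity
      have he : (P⁻¹ / (2 * (M 1 + 1))) * M 1 = P⁻¹ / 2 * (M 1 / (M 1 + 1)) := by
        field_simp
      rw [he]
      exact mul_le_of_le_one_right (by positivity) (by rw [div_le_one (by linarith)]; linarith)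
    linarith
  have hup0 : (0:ℝ) < (m * u') ^ p := Real.rpow_pos_of_pos hu0 p
  obtain ⟨a, ha_def⟩ : ∃ a : ℝ, a = P * (m * u') ^ p / M (u' * w) := ⟨_, rfl⟩
  have ha0 : 0 < a := by rw [ha_def]; positivity
  refine ⟨max ⌈a⌉₊ 1, hu0, hu1, hv0, hv1, hupow, le_max_right _ _, ?_, ?_⟩
  · have hNle : ((max ⌈a⌉₊ 1 : ℕ):ℝ) ≤ a + 1 := by
      push_cast [Nat.cast_max]
      exact max_le (Nat.ceil_lt_add_one ha0.le).le (by linarith)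
    have ha_le : a * M w ≤ 1 / (8 * P) := by
      rw [ha_def, div_mul_eq_mul_div, div_le_div_iff₀ hMuv (by positivity)]
      calc P * (m * u') ^ p * M w * (8 * P) = 8 * P^2 * ((m*u')^p * M w) := by ring
        _ ≤ M (u' * w) := hkey.le
        _ = 1 * M (u' * w) := (one_mul _).symm
    rw [hmv]
    have h8 : (1:ℝ) / (8 * P) ≤ P⁻¹ / 2 := by
      have he : (1:ℝ) / (8 * P) = P⁻¹ / 8 := by
        rw [one_div, mul_inv]; ring
      rw [he]
      linarith
    have hstep : (a + 1) * M w ≤ P⁻¹ := by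
      calc (a + 1) * M w = a * M w + M w := by ring
        _ ≤ 1 / (8 * P) + P⁻¹ / 2 := by linarith
        _ ≤ P⁻¹ / 2 + P⁻¹ / 2 := by linarith
        _ = P⁻¹ := by ring
    calc ((max ⌈a⌉₊ 1 : ℕ):ℝ) * M w ≤ (a + 1) * M w :=
          mul_le_mul_of_nonneg_right hNle hMw.le
      _ ≤ P⁻¹ := hstep
  · rw [huv]
    have hNa : a ≤ ((max ⌈a⌉₊ 1 : ℕ):ℝ) := by
      push_cast [Nat.cast_max]
      exact le_max_of_le_left (Nat.le_ceil a)
    have heq : P * (m * u') ^ p = a * M (u' * w) := by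
      rw [ha_def]; field_simp
    rw [heq]
    exact mul_le_mul_of_nonneg_right hNa hMuv.le

/-- Let `M` be an Orlicz function and `p ≥ 1`.  If
`sup { M (u*v) / (u^p * M v) : u, v ∈ (0,1] } = ∞` (i.e. that set of quotients is not
bounded above), then there is a sequence `z : ℕ → ℝ`, not identically zero, such that
`n ↦ M (c * z n)` is summable for every real `c` (i.e. `z ∈ h_M`) and the quotient
`(∑' n, M (t * z n)) / t^p` is unbounded as `t → 0⁺`. -/
theorem orlicz_exists_vector_with_unbounded_modular_quotient
    (M : ℝ → ℝ) (p : ℝ) (hp : 1 ≤ p)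
    (hconv : ConvexOn ℝ Set.univ M)
    (heven : ∀ t : ℝ, M (-t) = M t)
    (hzero : M 0 = 0)
    (hpos : ∀ t : ℝ, t ≠ 0 → 0 < M t)
    (hsup : ¬ BddAbove {r : ℝ | ∃ u ∈ Set.Ioc (0:ℝ) 1, ∃ v ∈ Set.Ioc (0:ℝ) 1,
        r = M (u * v) / (u ^ p * M v)}) :
    ∃ z : ℕ → ℝ, z ≠ 0 ∧
      (∀ c : ℝ, Summable fun n : ℕ => M (c * z n)) ∧
      (∀ R : ℝ, ∀ ε : ℝ, 0 < ε → ∃ s : ℝ, 0 < s ∧ s < ε ∧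
        R < (∑' n : ℕ, M (s * z n)) / s ^ p) := by
  rcases eq_or_lt_of_le hp with hp1 | hp1
  · exfalso
    apply hsup
    refine ⟨1, fun r hr => ?_⟩
    obtain ⟨u, ⟨hu0, hu1⟩, x, ⟨hx0, hx1⟩, rfl⟩ := hr
    have hux : u ^ p = u := by rw [← hp1, Real.rpow_one]
    rw [hux, div_le_one (mul_pos hu0 (hpos x hx0.ne'))]
    exact orlicz_scale M hconv hzero u x hu0.le hu1
  -- main construction
  have hMnn := orlicz_nonneg M hzero hpos
  choose u v N hu0 hu1 hv0 hv1 hupow hN1 hNsmall hNbig using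
    orlicz_claimB M p hp1 hconv hzero hpos hsup
  obtain ⟨e⟩ : Nonempty (ℕ × ℕ ≃ ℕ) := ⟨Denumerable.eqv (ℕ × ℕ)⟩
  obtain ⟨z, hz⟩ : ∃ z : ℕ → ℝ,
      z = fun n => if (e.symm n).2 < N (e.symm n).1 then v (e.symm n).1 else 0 := ⟨_, rfl⟩
  have hze : ∀ q : ℕ × ℕ, z (e q) = if q.2 < N q.1 then v q.1 else 0 := by
    intro q
    rw [hz]
    simp only [Equiv.symm_apply_apply]
  -- summability for every scalar
  have hSumAll : ∀ c : ℝ, Summable fun n : ℕ => M (c * z n) := by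
    intro c
    apply (Equiv.summable_iff e).mp
    have hfe : ((fun n => M (c * z n)) ∘ e) =
        fun q : ℕ × ℕ => if q.2 < N q.1 then M (c * v q.1) else 0 := by
      funext q
      simp only [Function.comp_apply, hze]
      split
      · rfl
      · rw [mul_zero, hzero]
    rw [hfe]
    have hnn : ∀ q : ℕ × ℕ, 0 ≤ if q.2 < N q.1 then M (c * v q.1) else 0 := by
      intro q
      split
      · exact hMnn _
      · exact le_refl _
    rw [summable_prod_of_nonneg hnn]
    constructor
    · intro x
      apply summable_of_ne_finset_zero (s := Finset.range (N x))
      intro i hi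
      rw [Finset.mem_range, not_lt] at hi
      exact if_neg (not_lt.mpr hi)
    · have htsum : ∀ x : ℕ, (∑' i : ℕ, if i < N x then M (c * v x) else 0)
          = (N x : ℝ) * M (c * v x) := by
        intro x
        rw [tsum_eq_sum (s := Finset.range (N x)) (by
          intro i hi
          rw [Finset.mem_range, not_lt] at hi
          exact if_neg (not_lt.mpr hi))]
        rw [Finset.sum_ite_of_true (by intro i hi; exact Finset.mem_range.mp hi)]
        rw [Finset.sum_const, Finset.card_range, nsmul_eq_mul]
      simp only [htsum]
      obtain ⟨K, hK⟩ : ∃ K : ℕ, |c| ≤ (K:ℝ) := ⟨⌈|c|⌉₊, Nat.le_ceil _⟩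
      rw [← summable_nat_add_iff K]
      have hbound : ∀ j : ℕ, ((N (j + K) : ℝ)) * M (c * v (j + K)) ≤ (1/2:ℝ)^(j+K) := by
        intro j
        set x := j + K with hx
        have hcle : |c| ≤ (x:ℝ) + 1 := by
          have : (K:ℝ) ≤ (x:ℝ) := by exact_mod_cast Nat.le_add_left K j
          linarith
        have habs : M (c * v x) = M (|c| * v x) := by
          rcases abs_cases c with ⟨h1, _⟩ | ⟨h1, _⟩
          · rw [h1]
          · rw [h1, neg_mul, heven]
        have hmono : M (|c| * v x) ≤ M (((x:ℝ) + 1) * v x) := by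
          apply orlicz_mono M hconv hzero hpos
          · exact mul_nonneg (abs_nonneg c) (hv0 x).le
          · exact mul_le_mul_of_nonneg_right hcle (hv0 x).le
        calc ((N x : ℝ)) * M (c * v x) = ((N x : ℝ)) * M (|c| * v x) := by rw [habs]
          _ ≤ ((N x : ℝ)) * M (((x:ℝ) + 1) * v x) :=
              mul_le_mul_of_nonneg_left hmono (by positivity)
          _ ≤ (1/2:ℝ)^x := hNsmall x
      apply Summable.of_nonneg_of_le
        (fun j => mul_nonneg (by positivity) (hMnn _)) hbound
      have hgeq : (fun j : ℕ => (1/2:ℝ)^(j+K)) = fun j : ℕ => (1/2:ℝ)^j * (1/2:ℝ)^K := by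
        funext j; rw [pow_add]
      rw [hgeq]
      exact (summable_geometric_of_lt_one (by norm_num) (by norm_num)).mul_right _
  refine ⟨z, ?_, hSumAll, ?_⟩
  · -- z ≠ 0
    intro h0
    have h1 := congrFun h0 (e (0, 0))
    rw [hze (0,0), Pi.zero_apply] at h1
    rw [if_pos (by show 0 < N 0; exact hN1 0)] at h1
    exact (hv0 0).ne' h1
  · -- part 3
    intro R ε hε
    have hε1 : (0:ℝ) < min ε 1 := lt_min hε one_pos
    obtain ⟨k1, hk1⟩ := exists_pow_lt_of_lt_one
      (show (0:ℝ) < (min ε 1) ^ (p-1) from Real.rpow_pos_of_pos hε1 _)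
      (show (1/2:ℝ) < 1 by norm_num)
    obtain ⟨k2, hk2⟩ := pow_unbounded_of_one_lt R (show (1:ℝ) < 2 by norm_num)
    set k := max k1 k2 with hk
    have hhalf : (1/2:ℝ)^k ≤ (1/2:ℝ)^k1 :=
      pow_le_pow_of_le_one (by norm_num) (by norm_num) (le_max_left _ _)
    have h2k : (2:ℝ)^k2 ≤ (2:ℝ)^k := pow_le_pow_right₀ one_le_two (le_max_right _ _)
    refine ⟨u k, hu0 k, ?_, ?_⟩
    · -- u k < ε
      have h1 : u k ^ (p-1) < (min ε 1) ^ (p-1) := by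
        calc u k ^ (p-1) < (1/2:ℝ)^k := hupow k
          _ ≤ (1/2:ℝ)^k1 := hhalf
          _ < (min ε 1) ^ (p-1) := hk1
      have h2 : u k < min ε 1 := by
        by_contra hcc
        push_neg at hcc
        exact absurd (Real.rpow_le_rpow hε1.le hcc (by linarith)) (not_le.mpr h1)
      exact h2.trans_le (min_le_left _ _)
    · -- R < tsum / (u k)^p
      have hup : (0:ℝ) < u k ^ p := Real.rpow_pos_of_pos (hu0 k) p
      have hSum : Summable fun n => M (u k * z n) := hSumAll (u k)
      have htse : ∑' q : ℕ×ℕ, M (u k * z (e q)) = ∑' n : ℕ, M (u k * z n) :=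
        Equiv.tsum_eq e (fun n => M (u k * z n))
      have hSum2 : Summable fun q : ℕ×ℕ => M (u k * z (e q)) :=
        (Equiv.summable_iff e).mpr hSum
      have hlow : (2:ℝ)^k * u k ^ p ≤ ∑' n : ℕ, M (u k * z n) := by
        rw [← htse]
        have hfin : ∑ q ∈ ({k} ×ˢ Finset.range (N k)), M (u k * z (e q))
            = (N k : ℝ) * M (u k * v k) := by
          rw [Finset.sum_product, Finset.sum_singleton]
          have hcongr : ∀ i ∈ Finset.range (N k), M (u k * z (e (k, i))) = M (u k * v k) := by
            intro i hi
            have : z (e (k, i)) = v k := by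
              rw [hze (k, i)]
              exact if_pos (Finset.mem_range.mp hi)
            rw [this]
          rw [Finset.sum_congr rfl hcongr, Finset.sum_const, Finset.card_range, nsmul_eq_mul]
        calc (2:ℝ)^k * u k ^ p ≤ (N k : ℝ) * M (u k * v k) := hNbig k
          _ = ∑ q ∈ ({k} ×ˢ Finset.range (N k)), M (u k * z (e q)) := hfin.symm
          _ ≤ ∑' q : ℕ×ℕ, M (u k * z (e q)) :=
              Summable.sum_le_tsum _ (fun q _ => hMnn _) hSum2
      have hfinal : (2:ℝ)^k ≤ (∑' n : ℕ, M (u k * z n)) / u k ^ p := by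
        rw [le_div_iff₀ hup]
        linarith
      calc R < (2:ℝ)^k2 := hk2
        _ ≤ (2:ℝ)^k := h2k
        _ ≤ _ := hfinal
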